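/- arXiv:0906.1518 — 3 statements merged into one kernel-verified Lean document; each statement's English description precedes it below -/
import Mathlib

section
/- Let k be a field, let V be a finite-dimensional graded k-vector space with homogeneous basis v₁,…,v_r, each v_i of odd positive degree, and let d be the degree −1 derivation on the tensor algebra T(V) determined by dv₁ = 0, dv₂ = 0 and dv_i = Σ_{j,k} α^i_{jk} v_j ⊗ v_k for i ≥ 3, where the scalars α^i_{jk} ∈ k satisfy α^i_{12} = α^i_{21} = 0 for all i, and assume d∘d = 0. Let (Q,δ) be the complex Q = T(V) ⊕ (T(V) ⊗ s̄V), where s̄V has basis v̄₁,…,v̄_r with |v̄_i| = |v_i| + 1, δ restricted to T(V) equals d, and for a ∈ T(V) homogeneous and v ∈ V with dv = Σ λ_{jk} v_j ⊗ v_k one has δ(a ⊗ v̄) = da ⊗ v̄ + (−1)^{|a|}(a v − (−1)^{|v||a|} v a) + (−1)^{|a|} Σ_{j,k} λ_{jk} a v_j ⊗ v̄_k − Σ_{j,k} λ_{jk} v_k a ⊗ v̄_j. For n ≥ 1 let X_n = v₁⊗v₂⊗v₁⊗⋯⊗v₁ ⊗ v̄₂ − v₂⊗v₁⊗v₂⊗⋯⊗v₂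 ⊗ v̄₁ (alternating words of tensor length 2n−1 in the T(V) factor, the first beginning and ending with v₁, the second with v₂). Then δ(X_n) = 0. -/
noncomputable section

/-- The tensor algebra `T(V)` on a graded vector space `V` with basis `v₀,…,v_{r-1}`,
modelled as the free algebra on `Fin r`. -/
abbrev TV (k : Type) [Field k] (r : ℕ) : Type := FreeAlgebra k (Fin r)

variable (k : Type) [Field k] (r : ℕ)

/-- The degree-`m` homogeneous component of `T(V)`, where the generator `vᵢ` has degree
`deg i`: the span of the words of total degree `m`. -/
def Tgr (deg : Fin r → ℕ) (m : ℕ) : Submodule k (TV k r) :=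
  Submodule.span k {x | ∃ w : List (Fin r), (w.map deg).sum = m ∧
    x = (w.map (FreeAlgebra.ι k)).prod}

/-- The sign involution `a ↦ (−1)^{|a|} a` of `T(V)` (all generators have odd degree),
i.e. the algebra map determined by `vᵢ ↦ −vᵢ`. -/
def sgn : TV k r →ₐ[k] TV k r := FreeAlgebra.lift k (fun i => -(FreeAlgebra.ι k i))

/-- The complex `Q = T(V) ⊕ (T(V) ⊗ s̄V)`, where `T(V) ⊗ s̄V` is encoded as the space of
(finitely many) coordinates `g : Fin r → T(V)`, `g i` being the coefficient of `v̄ᵢ`. -/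
abbrev QC : Type := TV k r × (Fin r → TV k r)

/-- The differential `δ` of the complex `Q`: it restricts to `d` on `T(V)`, and on
`a ⊗ v̄ᵢ` (with `d vᵢ = Σ_{j,l} α i j l · vⱼ ⊗ v_l`) it is given by
`δ(a ⊗ v̄ᵢ) = d a ⊗ v̄ᵢ + ((−1)^{|a|} a vᵢ − vᵢ a)
  + Σ_{j,l} α i j l · ((−1)^{|a|} a vⱼ) ⊗ v̄_l − Σ_{j,l} α i j l · (v_l a) ⊗ v̄ⱼ`,
the sign `(−1)^{|a|}` being implemented by the involution `sgn`. -/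
def deltaQ (d : TV k r →ₗ[k] TV k r) (α : Fin r → Fin r → Fin r → k) :
    QC k r →ₗ[k] QC k r :=
  LinearMap.prod
    (d ∘ₗ LinearMap.fst k (TV k r) (Fin r → TV k r) +
      ∑ i : Fin r,
        (LinearMap.mulRight k (FreeAlgebra.ι k i) ∘ₗ (sgn k r).toLinearMap ∘ₗ
            LinearMap.proj i ∘ₗ LinearMap.snd k (TV k r) (Fin r → TV k r)
         - LinearMap.mulLeft k (FreeAlgebra.ι k i) ∘ₗ
            LinearMap.proj i ∘ₗ LinearMap.snd k (TV k r) (Fin r → TV k r)))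
    (LinearMap.pi fun t =>
      d ∘ₗ LinearMap.proj t ∘ₗ LinearMap.snd k (TV k r) (Fin r → TV k r)
      + ∑ i : Fin r, ∑ j : Fin r, α i j t •
          (LinearMap.mulRight k (FreeAlgebra.ι k j) ∘ₗ (sgn k r).toLinearMap ∘ₗ
            LinearMap.proj i ∘ₗ LinearMap.snd k (TV k r) (Fin r → TV k r))
      - ∑ i : Fin r, ∑ l : Fin r, α i t l •
          (LinearMap.mulLeft k (FreeAlgebra.ι k l) ∘ₗ
            LinearMap.proj i ∘ₗ LinearMap.snd k (TV k r) (Fin r → TV k r)))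

/-- The alternating word `v_s v_t v_s v_t ⋯` of length `len` in `T(V)`. -/
def altWord (s t : Fin r) (len : ℕ) : TV k r :=
  (((List.range len).map fun j => if j % 2 = 0 then s else t).map (FreeAlgebra.ι k)).prod

/-- The cycle `X_n = v₁v₂v₁⋯v₁ ⊗ v̄₂ − v₂v₁v₂⋯v₂ ⊗ v̄₁` (alternating words of length
`2n−1`), an element of `T(V) ⊗ s̄V ⊆ Q`.  Here `v₁, v₂` are the generators of index `0, 1`. -/
def Xcyc (hr : 2 ≤ r) (n : ℕ) : QC k r :=
  (0, fun u =>
    if u = (⟨1, by omega⟩ : Fin r) then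
      altWord k r ⟨0, by omega⟩ ⟨1, by omega⟩ (2 * n - 1)
    else if u = (⟨0, by omega⟩ : Fin r) then
      -(altWord k r ⟨1, by omega⟩ ⟨0, by omega⟩ (2 * n - 1))
    else 0)

lemma ι_mem_Tgr (deg : Fin r → ℕ) (i : Fin r) :
    FreeAlgebra.ι k i ∈ Tgr k r deg (deg i) :=
  Submodule.subset_span ⟨[i], by simp⟩

lemma one_mem_Tgr (deg : Fin r → ℕ) : (1 : TV k r) ∈ Tgr k r deg 0 :=
  Submodule.subset_span ⟨[], by simp⟩

lemma sgn_ι (i : Fin r) : sgn k r (FreeAlgebra.ι k i) = -(FreeAlgebra.ι k i) := by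
  simp [sgn]

lemma sgn_word (w : List (Fin r)) :
    sgn k r ((w.map (FreeAlgebra.ι k)).prod)
      = (-1:k)^w.length • (w.map (FreeAlgebra.ι k)).prod := by
  induction w with
  | nil => simp
  | cons a w ih =>
    simp only [List.map_cons, List.prod_cons, map_mul, sgn_ι, ih, List.length_cons,
      pow_succ]
    rw [mul_smul_comm, neg_mul, smul_neg, mul_neg_one, neg_smul]

lemma d_word (deg : Fin r → ℕ) (d : TV k r →ₗ[k] TV k r)
    (hLeib : ∀ m : ℕ, ∀ a ∈ Tgr k r deg m, ∀ b : TV k r,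
      d (a * b) = d a * b + ((-1 : k) ^ m) • (a * d b))
    (hdeg0 : ∀ x ∈ Tgr k r deg 0, d x = 0) (w : List (Fin r))
    (h : ∀ i ∈ w, d (FreeAlgebra.ι k i) = 0) :
    d ((w.map (FreeAlgebra.ι k)).prod) = 0 := by
  induction w with
  | nil => simpa using hdeg0 1 (one_mem_Tgr k r deg)
  | cons a w ih =>
    rw [List.map_cons, List.prod_cons,
      hLeib (deg a) _ (ι_mem_Tgr k r deg a) _, h a (by simp),
      ih (fun i hi => h i (by simp [hi])), mul_zero, smul_zero, zero_mul, zero_add]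

lemma d_altWord (deg : Fin r → ℕ) (d : TV k r →ₗ[k] TV k r)
    (hLeib : ∀ m : ℕ, ∀ a ∈ Tgr k r deg m, ∀ b : TV k r,
      d (a * b) = d a * b + ((-1 : k) ^ m) • (a * d b))
    (hdeg0 : ∀ x ∈ Tgr k r deg 0, d x = 0) (s t : Fin r)
    (hs : d (FreeAlgebra.ι k s) = 0) (ht : d (FreeAlgebra.ι k t) = 0) (len : ℕ) :
    d (altWord k r s t len) = 0 := by
  apply d_word k r deg d hLeib hdeg0
  intro i hi
  simp only [List.mem_map, List.mem_range] at hi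
  obtain ⟨j, _, rfl⟩ := hi
  split <;> assumption

lemma sgn_altWord (s t : Fin r) (len : ℕ) :
    sgn k r (altWord k r s t len) = (-1:k)^len • altWord k r s t len := by
  unfold altWord; rw [sgn_word]; simp

lemma altWord_succ_right (s t : Fin r) (len : ℕ) :
    altWord k r s t (len+1)
      = altWord k r s t len * FreeAlgebra.ι k (if len % 2 = 0 then s else t) := by
  unfold altWord
  rw [List.range_succ]
  simp

lemma altWord_succ_left (s t : Fin r) (len : ℕ) :
    altWord k r s t (len+1) = FreeAlgebra.ι k s * altWord k r t s len := by
  unfold altWord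
  rw [List.range_succ_eq_map]
  simp only [List.map_cons, List.map_map, List.prod_cons, Nat.zero_mod, if_pos rfl]
  congr 2
  apply List.map_congr_left
  intro j _
  simp only [Function.comp_apply]
  rcases Nat.mod_two_eq_zero_or_one j with h | h <;> simp [Nat.add_mod, h]

/-- Let `V` have homogeneous basis `v₁,…,v_r` of odd positive degrees and
let `d` be the degree `−1` derivation of `T(V)` with `dv₁ = dv₂ = 0` and
`dvᵢ = Σ_{j,l} α^i_{jl} vⱼ ⊗ v_l`, where `α^i_{12} = α^i_{21} = 0` for all `i` and
`d ∘ d = 0`.  Then the elements `X_n ∈ Q = T(V) ⊕ (T(V) ⊗ s̄V)` are cycles: `δ(X_n) = 0`. -/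
theorem deltaQ_Xcyc_eq_zero
    (k : Type) [Field k] (r : ℕ) (hr : 2 ≤ r)
    (deg : Fin r → ℕ) (hodd : ∀ i, Odd (deg i)) (hpos : ∀ i, 0 < deg i)
    (d : TV k r →ₗ[k] TV k r) (α : Fin r → Fin r → Fin r → k)
    (hd1 : d (FreeAlgebra.ι k (⟨0, by omega⟩ : Fin r)) = 0)
    (hd2 : d (FreeAlgebra.ι k (⟨1, by omega⟩ : Fin r)) = 0)
    (hα1 : ∀ j l, α ⟨0, by omega⟩ j l = 0)
    (hα2 : ∀ j l, α ⟨1, by omega⟩ j l = 0)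
    (hα12 : ∀ i, α i ⟨0, by omega⟩ ⟨1, by omega⟩ = 0)
    (hα21 : ∀ i, α i ⟨1, by omega⟩ ⟨0, by omega⟩ = 0)
    (hgen : ∀ i, d (FreeAlgebra.ι k i) =
      ∑ j : Fin r, ∑ l : Fin r, α i j l • (FreeAlgebra.ι k j * FreeAlgebra.ι k l))
    (hαdeg : ∀ i j l, α i j l ≠ 0 → deg j + deg l + 1 = deg i)
    (hLeib : ∀ m : ℕ, ∀ a ∈ Tgr k r deg m, ∀ b : TV k r,
      d (a * b) = d a * b + ((-1 : k) ^ m) • (a * d b))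
    (hdd : d ∘ₗ d = 0)
    (hdeg : ∀ m : ℕ, ∀ x ∈ Tgr k r deg (m + 1), d x ∈ Tgr k r deg m)
    (hdeg0 : ∀ x ∈ Tgr k r deg 0, d x = 0) :
    ∀ n : ℕ, 1 ≤ n → deltaQ k r d α (Xcyc k r hr n) = 0 := by
  intro n hn
  have e0 : Fin r := ⟨0, by omega⟩
  set A := altWord k r (⟨0, by omega⟩ : Fin r) (⟨1, by omega⟩ : Fin r) (2*n-1) with hA
  set B := altWord k r (⟨1, by omega⟩ : Fin r) (⟨0, by omega⟩ : Fin r) (2*n-1) with hB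
  have hne : (⟨0, by omega⟩ : Fin r) ≠ (⟨1, by omega⟩ : Fin r) := by
    simp [Fin.ext_iff]
  have hdA : d A = 0 := d_altWord k r deg d hLeib hdeg0 _ _ hd1 hd2 _
  have hdB : d B = 0 := d_altWord k r deg d hLeib hdeg0 _ _ hd2 hd1 _
  have hoddn : Odd (2*n-1) := ⟨n-1, by omega⟩
  have hsA : sgn k r A = -A := by
    rw [hA, sgn_altWord, Odd.neg_one_pow hoddn, neg_one_smul]
  have hsB : sgn k r B = -B := by
    rw [hB, sgn_altWord, Odd.neg_one_pow hoddn, neg_one_smul]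
  have hmod : (2*n-1) % 2 = 1 := by omega
  have hlen : 2*n - 1 + 1 = 2*n := by omega
  have hAB : A * FreeAlgebra.ι k (⟨1, by omega⟩ : Fin r)
      = FreeAlgebra.ι k (⟨0, by omega⟩ : Fin r) * B := by
    have h1 := altWord_succ_right k r (⟨0, by omega⟩ : Fin r) (⟨1, by omega⟩ : Fin r) (2*n-1)
    have h2 := altWord_succ_left k r (⟨0, by omega⟩ : Fin r) (⟨1, by omega⟩ : Fin r) (2*n-1)
    rw [hmod] at h1
    simp only [one_ne_zero, if_false] at h1
    rw [← hA, ← hB] at *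
    rw [← h1, h2]
  have hBA : B * FreeAlgebra.ι k (⟨0, by omega⟩ : Fin r)
      = FreeAlgebra.ι k (⟨1, by omega⟩ : Fin r) * A := by
    have h1 := altWord_succ_right k r (⟨1, by omega⟩ : Fin r) (⟨0, by omega⟩ : Fin r) (2*n-1)
    have h2 := altWord_succ_left k r (⟨1, by omega⟩ : Fin r) (⟨0, by omega⟩ : Fin r) (2*n-1)
    rw [hmod] at h1
    simp only [one_ne_zero, if_false] at h1
    rw [← hA, ← hB] at *
    rw [← h1, h2]
  simp only [deltaQ, Xcyc, LinearMap.prod_apply, Function.prod, LinearMap.add_apply,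
    LinearMap.sub_apply, LinearMap.coe_comp, Function.comp_apply, LinearMap.fst_apply,
    LinearMap.snd_apply, LinearMap.proj_apply, LinearMap.coe_sum, Finset.sum_apply,
    LinearMap.mulRight_apply, LinearMap.mulLeft_apply, LinearMap.pi_apply,
    LinearMap.smul_apply, map_zero, AlgHom.toLinearMap_apply, ← hA, ← hB]
  rw [Prod.mk_eq_zero]
  constructor
  · -- first component
    rw [show (∑ i : Fin r,
        (sgn k r (if i = ⟨1, by omega⟩ then A else if i = ⟨0, by omega⟩ then -B else 0) *
            FreeAlgebra.ι k i -
          FreeAlgebra.ι k i *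
            (if i = ⟨1, by omega⟩ then A else if i = ⟨0, by omega⟩ then -B else 0)))
        = ∑ i ∈ ({⟨0, by omega⟩, ⟨1, by omega⟩} : Finset (Fin r)),
        (sgn k r (if i = ⟨1, by omega⟩ then A else if i = ⟨0, by omega⟩ then -B else 0) *
            FreeAlgebra.ι k i -
          FreeAlgebra.ι k i *
            (if i = ⟨1, by omega⟩ then A else if i = ⟨0, by omega⟩ then -B else 0))
      from (Finset.sum_subset (Finset.subset_univ _) (fun x _ hx => by
        simp only [Finset.mem_insert, Finset.mem_singleton, not_or] at hx
        rw [if_neg hx.2, if_neg hx.1]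
        simp)).symm]
    rw [Finset.sum_pair hne]
    rw [if_neg hne, if_pos rfl, if_pos rfl, map_neg, hsA, hsB, neg_neg]
    rw [neg_mul, mul_neg, hAB, hBA]
    abel
  · -- second component
    funext t
    simp only [LinearMap.pi_apply, LinearMap.add_apply, LinearMap.sub_apply,
      LinearMap.coe_comp, Function.comp_apply, LinearMap.snd_apply, LinearMap.proj_apply,
      LinearMap.coe_sum, Finset.sum_apply, LinearMap.smul_apply,
      LinearMap.mulRight_apply, LinearMap.mulLeft_apply, AlgHom.toLinearMap_apply,
      Pi.zero_apply]
    have hsums0 : ∀ (F : Fin r → Fin r → TV k r),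
        (∑ i : Fin r, ∑ j : Fin r,
          α i j t • (sgn k r (if i = ⟨1, by omega⟩ then A else
            if i = ⟨0, by omega⟩ then -B else 0) * FreeAlgebra.ι k j)) = 0 := by
      intro _
      apply Finset.sum_eq_zero; intro i _
      apply Finset.sum_eq_zero; intro j _
      by_cases h1 : i = (⟨1, by omega⟩ : Fin r)
      · subst h1; rw [hα2, zero_smul]
      · by_cases h0 : i = (⟨0, by omega⟩ : Fin r)
        · subst h0; rw [hα1, zero_smul]
        · rw [if_neg h1, if_neg h0]; simp
    have hsums1 :
        (∑ i : Fin r, ∑ l : Fin r,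
          α i t l • (FreeAlgebra.ι k l * (if i = ⟨1, by omega⟩ then A else
            if i = ⟨0, by omega⟩ then -B else 0))) = 0 := by
      apply Finset.sum_eq_zero; intro i _
      apply Finset.sum_eq_zero; intro l _
      by_cases h1 : i = (⟨1, by omega⟩ : Fin r)
      · subst h1; rw [hα2, zero_smul]
      · by_cases h0 : i = (⟨0, by omega⟩ : Fin r)
        · subst h0; rw [hα1, zero_smul]
        · rw [if_neg h1, if_neg h0]; simp
    rw [hsums0 (fun _ _ => 0), hsums1]
    have hdt : d (if t = (⟨1, by omega⟩ : Fin r) then A else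
        if t = (⟨0, by omega⟩ : Fin r) then -B else 0) = 0 := by
      by_cases h1 : t = (⟨1, by omega⟩ : Fin r)
      · rw [if_pos h1]; exact hdA
      · rw [if_neg h1]
        by_cases h0 : t = (⟨0, by omega⟩ : Fin r)
        · rw [if_pos h0, map_neg, hdB, neg_zero]
        · rw [if_neg h0, map_zero]
    rw [hdt]
    simp
end
end

section
/- Let k be a field, let V be a finite-dimensional graded k-vector space with homogeneous basis v₁,…,v_r, each v_i of odd positive degree, and let d be the degree −1 derivation on the tensor algebra T(V) determined by dv₁ = 0, dv₂ = 0 and dv_i = Σ_{j,k} α^i_{jk} v_j ⊗ v_k for i ≥ 3, where the scalars α^i_{jk} ∈ k satisfy α^i_{12} = α^i_{21} = 0 for all i, and assume d∘d = 0. Let (Q,δ) be the complex Q = T(V) ⊕ (T(V) ⊗ s̄V), where s̄V has basis v̄₁,…,v̄_r with |v̄_i| = |v_i| + 1, δ restricted to T(V) equals d, and for a ∈ T(V) homogeneous and v ∈ V with dv = Σ λ_{jk} v_j ⊗ v_k one has δ(a ⊗ v̄) = da ⊗ v̄ + (−1)^{|a|}(a v − (−1)^{|v||a|} v a) + (−1)^{|a|}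 Σ_{j,k} λ_{jk} a v_j ⊗ v̄_k − Σ_{j,k} λ_{jk} v_k a ⊗ v̄_j. For n ≥ 1 let X_n = v₁⊗v₂⊗v₁⊗⋯⊗v₁ ⊗ v̄₂ − v₂⊗v₁⊗v₂⊗⋯⊗v₂ ⊗ v̄₁ (alternating words of tensor length 2n−1 in the T(V) factor, the first beginning and ending with v₁, the second with v₂). Then X_n is not a boundary: there is no element Z ∈ Q with δ(Z) = X_n. -/
noncomputable section

variable (k : Type) [Field k] (r : ℕ)

/-! ### Auxiliary machinery: word products and coefficient functionals -/

/-- The product of the word `w` in the free algebra. -/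
def wp (k : Type) [Field k] {r : ℕ} (w : List (Fin r)) : TV k r :=
  (w.map (FreeAlgebra.ι k)).prod

/-- The linear functional extracting the coefficient of the word `L`. -/
def coefF (k : Type) [Field k] {r : ℕ} (L : List (Fin r)) : TV k r →ₗ[k] k where
  toFun x := (FreeAlgebra.equivMonoidAlgebraFreeMonoid (R := k) (X := Fin r) x).coeff
      (FreeMonoid.ofList L)
  map_add' x y := by simp only [map_add]; rfl
  map_smul' c x := by simp only [map_smul, RingHom.id_apply]; rfl

lemma toMA_ι {k : Type} [Field k] {r : ℕ} (i : Fin r) :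
    FreeAlgebra.equivMonoidAlgebraFreeMonoid (FreeAlgebra.ι k i)
      = MonoidAlgebra.single (FreeMonoid.of i) 1 := by
  simp [FreeAlgebra.equivMonoidAlgebraFreeMonoid]

lemma toMA_wp {k : Type} [Field k] {r : ℕ} (w : List (Fin r)) :
    FreeAlgebra.equivMonoidAlgebraFreeMonoid (wp k w)
      = MonoidAlgebra.single (FreeMonoid.ofList w) 1 := by
  induction w with
  | nil => simp only [wp, List.map_nil, List.prod_nil, map_one, MonoidAlgebra.one_def]; rfl
  | cons i w ih =>
      have : wp k (i :: w) = FreeAlgebra.ι k i * wp k w := by simp [wp]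
      rw [this, map_mul, toMA_ι, ih, MonoidAlgebra.single_mul_single, one_mul,
        FreeMonoid.ofList_cons]

lemma coefF_wp {k : Type} [Field k] {r : ℕ} (L w : List (Fin r)) :
    coefF k L (wp k w) = if w = L then 1 else 0 := by
  show (FreeAlgebra.equivMonoidAlgebraFreeMonoid (wp k w)).coeff (FreeMonoid.ofList L)
    = if w = L then 1 else 0
  classical
  rw [toMA_wp, MonoidAlgebra.single_apply]
  by_cases h : w = L
  · subst h; simp
  · rw [if_neg (fun hh => h (FreeMonoid.ofList.injective hh)), if_neg h]

lemma coefF_mul_ι {k : Type} [Field k] {r : ℕ} (L : List (Fin r)) (j : Fin r)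
    (h : ∀ u, L ≠ u ++ [j]) (x : TV k r) :
    coefF k L (x * FreeAlgebra.ι k j) = 0 := by
  show (FreeAlgebra.equivMonoidAlgebraFreeMonoid (x * FreeAlgebra.ι k j)).coeff
      (FreeMonoid.ofList L) = 0
  rw [map_mul, toMA_ι]
  apply MonoidAlgebra.mul_single_apply_of_not_exists_mul
  rintro ⟨u, hu⟩
  exact h (FreeMonoid.toList u) (congrArg FreeMonoid.toList hu)

lemma coefF_ι_mul {k : Type} [Field k] {r : ℕ} (L : List (Fin r)) (j : Fin r)
    (h : ∀ u, L ≠ j :: u) (x : TV k r) :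
    coefF k L (FreeAlgebra.ι k j * x) = 0 := by
  show (FreeAlgebra.equivMonoidAlgebraFreeMonoid (FreeAlgebra.ι k j * x)).coeff
      (FreeMonoid.ofList L) = 0
  rw [map_mul, toMA_ι]
  apply MonoidAlgebra.single_mul_apply_of_not_exists_mul
  rintro ⟨u, hu⟩
  exact h (FreeMonoid.toList u) (congrArg FreeMonoid.toList hu)

lemma mem_span_words {k : Type} [Field k] {r : ℕ} (x : TV k r) :
    x ∈ Submodule.span k {y : TV k r | ∃ w : List (Fin r), y = wp k w} := by
  set S := Submodule.span k {y : TV k r | ∃ w : List (Fin r), y = wp k w} with hS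
  have hmul : ∀ a ∈ S, ∀ b ∈ S, a * b ∈ S := by
    intro a ha
    induction ha using Submodule.span_induction with
    | mem x hx =>
        intro b hb
        induction hb using Submodule.span_induction with
        | mem y hy =>
            obtain ⟨w1, rfl⟩ := hx
            obtain ⟨w2, rfl⟩ := hy
            exact Submodule.subset_span ⟨w1 ++ w2, by simp [wp]⟩
        | zero => rw [mul_zero]; exact zero_mem _
        | add y z _ _ h1 h2 => rw [mul_add]; exact add_mem h1 h2
        | smul c y _ h1 => rw [mul_smul_comm]; exact Submodule.smul_mem _ _ h1
    | zero => intro b _; rw [zero_mul]; exact zero_mem _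
    | add y z _ _ h1 h2 => intro b hb; rw [add_mul]; exact add_mem (h1 b hb) (h2 b hb)
    | smul c y _ h1 => intro b hb; rw [smul_mul_assoc]; exact Submodule.smul_mem _ _ (h1 b hb)
  induction x using FreeAlgebra.induction with
  | grade0 c =>
      rw [Algebra.algebraMap_eq_smul_one]
      exact Submodule.smul_mem _ _ (Submodule.subset_span ⟨[], by simp [wp]⟩)
  | grade1 i => exact Submodule.subset_span ⟨[i], by simp [wp]⟩
  | mul a b ha hb => exact hmul a ha b hb
  | add a b ha hb => exact add_mem ha hb

/-- A word is *bad* if it contains an adjacent pair other than `(i0,i1)` and `(i1,i0)`. -/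
def Bad {r : ℕ} (i0 i1 : Fin r) (w : List (Fin r)) : Prop :=
  ∃ u j l v, w = u ++ j :: l :: v ∧ ¬((j = i0 ∧ l = i1) ∨ (j = i1 ∧ l = i0))

/-- The span of the bad words. -/
def Kbad (k : Type) [Field k] {r : ℕ} (i0 i1 : Fin r) : Submodule k (TV k r) :=
  Submodule.span k {x | ∃ w, Bad i0 i1 w ∧ x = wp k w}

lemma Kbad_mul_left {k : Type} [Field k] {r : ℕ} (i0 i1 i : Fin r) {x : TV k r}
    (hx : x ∈ Kbad k i0 i1) :
    FreeAlgebra.ι k i * x ∈ Kbad k i0 i1 := by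
  induction hx using Submodule.span_induction with
  | mem y hy =>
      obtain ⟨w, hw, rfl⟩ := hy
      refine Submodule.subset_span ⟨i :: w, ?_, by simp [wp]⟩
      obtain ⟨u, j, l, v, rfl, hjl⟩ := hw
      exact ⟨i :: u, j, l, v, rfl, hjl⟩
  | zero => rw [mul_zero]; exact zero_mem _
  | add y z _ _ h1 h2 => rw [mul_add]; exact add_mem h1 h2
  | smul c y _ h1 => rw [mul_smul_comm]; exact Submodule.smul_mem _ _ h1

lemma d_wp_mem {k : Type} [Field k] {r : ℕ} (i0 i1 : Fin r) (deg : Fin r → ℕ)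
    (d : TV k r →ₗ[k] TV k r) (α : Fin r → Fin r → Fin r → k)
    (hα12 : ∀ i, α i i0 i1 = 0) (hα21 : ∀ i, α i i1 i0 = 0)
    (hgen : ∀ i, d (FreeAlgebra.ι k i) =
      ∑ j : Fin r, ∑ l : Fin r, α i j l • (FreeAlgebra.ι k j * FreeAlgebra.ι k l))
    (hLeib : ∀ m : ℕ, ∀ a ∈ Tgr k r deg m, ∀ b : TV k r,
      d (a * b) = d a * b + ((-1 : k) ^ m) • (a * d b))
    (hdeg0 : ∀ x ∈ Tgr k r deg 0, d x = 0) :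
    ∀ w : List (Fin r), d (wp k w) ∈ Kbad k i0 i1 := by
  intro w
  induction w with
  | nil =>
      have h1 : wp k ([] : List (Fin r)) = 1 := by simp [wp]
      have : d (wp k ([] : List (Fin r))) = 0 :=
        hdeg0 _ (Submodule.subset_span ⟨[], by simp, by simp [h1, wp]⟩)
      rw [this]; exact zero_mem _
  | cons i w ih =>
      have h1 : wp k (i :: w) = FreeAlgebra.ι k i * wp k w := by simp [wp]
      have hι : FreeAlgebra.ι k i ∈ Tgr k r deg (deg i) :=
        Submodule.subset_span ⟨[i], by simp, by simp⟩
      rw [h1, hLeib (deg i) _ hι (wp k w), hgen i]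
      apply add_mem
      · rw [Finset.sum_mul]
        apply Submodule.sum_mem
        intro j _
        rw [Finset.sum_mul]
        apply Submodule.sum_mem
        intro l _
        rw [smul_mul_assoc]
        by_cases hjl : (j = i0 ∧ l = i1) ∨ (j = i1 ∧ l = i0)
        · have hz : α i j l = 0 := by
            rcases hjl with ⟨rfl, rfl⟩ | ⟨rfl, rfl⟩
            · exact hα12 i
            · exact hα21 i
          rw [hz, zero_smul]; exact zero_mem _
        · refine Submodule.smul_mem _ _ (Submodule.subset_span
            ⟨j :: l :: w, ⟨[], j, l, w, rfl, hjl⟩, by simp [wp, mul_assoc]⟩)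
      · exact Submodule.smul_mem _ _ (Kbad_mul_left i0 i1 i ih)

lemma d_mem {k : Type} [Field k] {r : ℕ} (i0 i1 : Fin r) (deg : Fin r → ℕ)
    (d : TV k r →ₗ[k] TV k r) (α : Fin r → Fin r → Fin r → k)
    (hα12 : ∀ i, α i i0 i1 = 0) (hα21 : ∀ i, α i i1 i0 = 0)
    (hgen : ∀ i, d (FreeAlgebra.ι k i) =
      ∑ j : Fin r, ∑ l : Fin r, α i j l • (FreeAlgebra.ι k j * FreeAlgebra.ι k l))
    (hLeib : ∀ m : ℕ, ∀ a ∈ Tgr k r deg m, ∀ b : TV k r,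
      d (a * b) = d a * b + ((-1 : k) ^ m) • (a * d b))
    (hdeg0 : ∀ x ∈ Tgr k r deg 0, d x = 0) (x : TV k r) :
    d x ∈ Kbad k i0 i1 := by
  have h := mem_span_words (k := k) x
  induction h using Submodule.span_induction with
  | mem y hy =>
      obtain ⟨w, rfl⟩ := hy
      exact d_wp_mem i0 i1 deg d α hα12 hα21 hgen hLeib hdeg0 w
  | zero => rw [map_zero]; exact zero_mem _
  | add y z _ _ h1 h2 => rw [map_add]; exact add_mem h1 h2
  | smul c y _ h1 => rw [map_smul]; exact Submodule.smul_mem _ _ h1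

lemma coefF_Kbad {k : Type} [Field k] {r : ℕ} (i0 i1 : Fin r) (L : List (Fin r))
    (hL : List.Chain' (fun a b => (a = i0 ∧ b = i1) ∨ (a = i1 ∧ b = i0)) L)
    {x : TV k r} (hx : x ∈ Kbad k i0 i1) : coefF k L x = 0 := by
  induction hx using Submodule.span_induction with
  | mem y hy =>
      obtain ⟨w, ⟨u, j, l, v, rfl, hbad⟩, rfl⟩ := hy
      rw [coefF_wp, if_neg]
      intro hw
      subst hw
      have h2 : List.Chain' (fun a b => (a = i0 ∧ b = i1) ∨ (a = i1 ∧ b = i0)) [j, l] :=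
        hL.infix ⟨u, v, by simp⟩
      exact hbad (List.isChain_cons_cons.mp h2).1
  | zero => rw [map_zero]
  | add y z _ _ h1 h2 => rw [map_add, h1, h2, add_zero]
  | smul c y _ h1 => rw [map_smul, h1, smul_zero]

/-- Let `V` have homogeneous basis `v₁,…,v_r` of odd positive degrees and
let `d` be the degree `−1` derivation of `T(V)` with `dv₁ = dv₂ = 0` and
`dvᵢ = Σ_{j,l} α^i_{jl} vⱼ ⊗ v_l`, where `α^i_{12} = α^i_{21} = 0` for all `i` and
`d ∘ d = 0`.  Then `X_n` is not a boundary in `(Q, δ)`: there is no `Z ∈ Q` with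
`δ(Z) = X_n`. -/
theorem Xcyc_not_boundary
    (k : Type) [Field k] (r : ℕ) (hr : 2 ≤ r)
    (deg : Fin r → ℕ) (hodd : ∀ i, Odd (deg i)) (hpos : ∀ i, 0 < deg i)
    (d : TV k r →ₗ[k] TV k r) (α : Fin r → Fin r → Fin r → k)
    (hd1 : d (FreeAlgebra.ι k (⟨0, by omega⟩ : Fin r)) = 0)
    (hd2 : d (FreeAlgebra.ι k (⟨1, by omega⟩ : Fin r)) = 0)
    (hα1 : ∀ j l, α ⟨0, by omega⟩ j l = 0)
    (hα2 : ∀ j l, α ⟨1, by omega⟩ j l = 0)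
    (hα12 : ∀ i, α i ⟨0, by omega⟩ ⟨1, by omega⟩ = 0)
    (hα21 : ∀ i, α i ⟨1, by omega⟩ ⟨0, by omega⟩ = 0)
    (hgen : ∀ i, d (FreeAlgebra.ι k i) =
      ∑ j : Fin r, ∑ l : Fin r, α i j l • (FreeAlgebra.ι k j * FreeAlgebra.ι k l))
    (hαdeg : ∀ i j l, α i j l ≠ 0 → deg j + deg l + 1 = deg i)
    (hLeib : ∀ m : ℕ, ∀ a ∈ Tgr k r deg m, ∀ b : TV k r,
      d (a * b) = d a * b + ((-1 : k) ^ m) • (a * d b))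
    (hdd : d ∘ₗ d = 0)
    (hdeg : ∀ m : ℕ, ∀ x ∈ Tgr k r deg (m + 1), d x ∈ Tgr k r deg m)
    (hdeg0 : ∀ x ∈ Tgr k r deg 0, d x = 0) :
    ∀ n : ℕ, 1 ≤ n → ¬ ∃ Z : QC k r, deltaQ k r d α Z = Xcyc k r hr n := by
  intro n hn
  rintro ⟨Z, hZ⟩
  have h0r : 0 < r := by omega
  have h1r : 1 < r := by omega
  set i0 : Fin r := ⟨0, h0r⟩ with hi0def
  set i1 : Fin r := ⟨1, h1r⟩ with hi1def
  have hα12' : ∀ i, α i i0 i1 = 0 := hα12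
  have hα21' : ∀ i, α i i1 i0 = 0 := hα21
  set LL : List (Fin r) :=
    (List.range (2 * n - 1)).map (fun p => if p % 2 = 0 then i0 else i1) with hLLdef
  have hLLlen : LL.length = 2 * n - 1 := by simp [hLLdef]
  have hchain : List.Chain' (fun a b => (a = i0 ∧ b = i1) ∨ (a = i1 ∧ b = i0)) LL := by
    rw [List.Chain', List.isChain_iff_getElem]
    intro p hp
    rw [hLLlen] at hp
    simp only [hLLdef, List.get_eq_getElem, List.getElem_map, List.getElem_range]
    rcases Nat.even_or_odd p with he | ho
    · have e1 : p % 2 = 0 := Nat.even_iff.mp he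
      have e2 : (p + 1) % 2 = 1 := by omega
      simp [e1, e2]
    · have e1 : p % 2 = 1 := Nat.odd_iff.mp ho
      have e2 : (p + 1) % 2 = 0 := by omega
      simp [e1, e2]
  have hlast : ∀ j : Fin r, j ≠ i0 → ∀ u, LL ≠ u ++ [j] := by
    intro j hj u h
    have hL0 : LL.getLast? = some i0 := by
      rw [List.getLast?_eq_getElem?, hLLlen]
      have e1 : 2 * n - 1 - 1 = 2 * n - 2 := by omega
      rw [e1, hLLdef, List.getElem?_map, List.getElem?_range (by omega : 2 * n - 2 < 2 * n - 1)]
      have e2 : (2 * n - 2) % 2 = 0 := by omega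
      simp [e2]
    rw [h, List.getLast?_concat] at hL0
    exact hj (Option.some.inj hL0)
  have hhead : ∀ j : Fin r, j ≠ i0 → ∀ u, LL ≠ j :: u := by
    intro j hj u h
    have hL0 : LL[0]? = some i0 := by
      rw [hLLdef, List.getElem?_map, List.getElem?_range (by omega : 0 < 2 * n - 1)]
      simp
    rw [h, List.getElem?_cons_zero] at hL0
    exact hj (Option.some.inj hL0)
  have hXval : (Xcyc k r hr n).2 i1 = wp k LL := by
    show (if i1 = (⟨1, by omega⟩ : Fin r) then
        altWord k r ⟨0, by omega⟩ ⟨1, by omega⟩ (2 * n - 1)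
      else if i1 = (⟨0, by omega⟩ : Fin r) then
        -(altWord k r ⟨1, by omega⟩ ⟨0, by omega⟩ (2 * n - 1))
      else 0) = wp k LL
    rw [if_pos rfl]
    rfl
  have hkey : coefF k LL ((deltaQ k r d α Z).2 i1) = 0 := by
    have hexp : (deltaQ k r d α Z).2 i1 =
        d (Z.2 i1)
        + ∑ i : Fin r, ∑ j : Fin r,
            α i j i1 • ((sgn k r) (Z.2 i) * FreeAlgebra.ι k j)
        - ∑ i : Fin r, ∑ l : Fin r,
            α i i1 l • (FreeAlgebra.ι k l * Z.2 i) := by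
      simp [deltaQ, LinearMap.prod_apply, LinearMap.pi_apply, LinearMap.sub_apply,
        LinearMap.add_apply, LinearMap.coe_sum, Finset.sum_apply, LinearMap.smul_apply,
        LinearMap.coe_comp, Function.comp_apply, LinearMap.proj_apply, LinearMap.snd_apply,
        LinearMap.mulRight_apply, LinearMap.mulLeft_apply, AlgHom.toLinearMap_apply]
    have hB : ∀ i j : Fin r,
        coefF k LL (α i j i1 • ((sgn k r) (Z.2 i) * FreeAlgebra.ι k j)) = 0 := by
      intro i j
      rw [map_smul]
      by_cases hj : j = i0
      · subst hj; rw [hα12' i]; simp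
      · rw [coefF_mul_ι LL j (hlast j hj), smul_zero]
    have hC : ∀ i l : Fin r,
        coefF k LL (α i i1 l • (FreeAlgebra.ι k l * Z.2 i)) = 0 := by
      intro i l
      rw [map_smul]
      by_cases hl : l = i0
      · subst hl; rw [hα21' i]; simp
      · rw [coefF_ι_mul LL l (hhead l hl), smul_zero]
    rw [hexp, map_sub, map_add,
      coefF_Kbad i0 i1 LL hchain (d_mem i0 i1 deg d α hα12' hα21' hgen hLeib hdeg0 _)]
    rw [map_sum, map_sum]
    rw [Finset.sum_eq_zero fun i _ => by
        rw [map_sum]; exact Finset.sum_eq_zero fun j _ => hB i j,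
      Finset.sum_eq_zero fun i _ => by
        rw [map_sum]; exact Finset.sum_eq_zero fun l _ => hC i l]
    simp
  have hfin := congrArg (coefF k LL) (congrFun (congrArg Prod.snd hZ) i1)
  rw [hkey, hXval, coefF_wp, if_pos rfl] at hfin
  exact zero_ne_one hfin
end
end

section
/- Let k be a field, let V be a finite-dimensional graded k-vector space with homogeneous basis v₁,…,v_r, each v_i of odd positive degree, and let d be the degree −1 derivation on the tensor algebra T(V) determined by dv₁ = 0, dv₂ = 0 and dv_i = Σ_{j,k} α^i_{jk} v_j ⊗ v_k for i ≥ 3, where the scalars α^i_{jk} ∈ k satisfy α^i_{12} = α^i_{21} = 0 for all i, and assume d∘d = 0. Let (Q,δ) be the complex Q = T(V) ⊕ (T(V) ⊗ s̄V), where s̄V has basis v̄₁,…,v̄_r with |v̄_i| = |v_i| + 1, δ restricted to T(V) equals d, and for a ∈ T(V) homogeneous and v ∈ V with dv = Σ λ_{jk} v_j ⊗ v_k one has δ(a ⊗ v̄) = da ⊗ v̄ + (−1)^{|a|}(a v − (−1)^{|v||a|} v a) + (−1)^{|a|} Σ_{j,k} λ_{jk} a v_j ⊗ v̄_k − Σ_{j,k}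 λ_{jk} v_k a ⊗ v̄_j. Then for every n ≥ 1 the homology of (Q,δ) in degree n(|v₁|+|v₂|)+1 is nonzero; in particular H_m(Q,δ) ≠ 0 for a strictly increasing sequence of integers m. -/
noncomputable section

variable (k : Type) [Field k] (r : ℕ)

/-- The degree-`m` homogeneous component of `Q = T(V) ⊕ (T(V) ⊗ s̄V)`, where `v̄ᵢ` has
degree `deg i + 1`. -/
def Qgr (deg : Fin r → ℕ) (m : ℕ) : Submodule k (QC k r) :=
  Submodule.prod (Tgr k r deg m)
    (Submodule.pi Set.univ fun i =>
      if deg i + 1 ≤ m then Tgr k r deg (m - (deg i + 1)) else ⊥)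

/-- The degree-`m` homology of the complex `(Q, δ)`: cycles of degree `m` modulo the
image under `δ` of the degree-`(m+1)` component. -/
abbrev HQ (deg : Fin r → ℕ) (d : TV k r →ₗ[k] TV k r)
    (α : Fin r → Fin r → Fin r → k) (m : ℕ) : Type :=
  ↥(Qgr k r deg m ⊓ LinearMap.ker (deltaQ k r d α)) ⧸
    Submodule.comap (Qgr k r deg m ⊓ LinearMap.ker (deltaQ k r d α)).subtype
      (Submodule.map (deltaQ k r d α) (Qgr k r deg (m + 1)))

namespace SAux

variable {k r}

/-- alternating list -/
def altL (s t : Fin r) (len : ℕ) : List (Fin r) :=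
  (List.range len).map fun j => if j % 2 = 0 then s else t

lemma altL_zero (s t : Fin r) : altL s t 0 = [] := rfl

lemma altL_cons (s t : Fin r) (len : ℕ) :
    altL s t (len + 1) = s :: altL t s len := by
  unfold altL
  rw [List.range_succ_eq_map, List.map_cons, List.map_map]
  simp only [if_pos (Nat.zero_mod 2)]
  congr 1
  apply List.map_congr_left
  intro j _
  simp only [Function.comp_apply, Nat.succ_mod_two_eq_zero_iff]
  rcases Nat.mod_two_eq_zero_or_one j with h | h <;> simp [h]

lemma altL_append (s t : Fin r) (len : ℕ) :
    altL s t (len + 1) = altL s t len ++ [if len % 2 = 0 then s else t] := by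
  unfold altL
  rw [List.range_succ, List.map_append, List.map_singleton]

lemma altL_sum (deg : Fin r → ℕ) (s t : Fin r) (m : ℕ) :
    ((altL s t (2 * m + 1)).map deg).sum = (m + 1) * deg s + m * deg t := by
  induction m with
  | zero => simp [altL_cons, altL_zero]
  | succ p ih =>
      have h : 2 * (p + 1) + 1 = (2 * p + 1) + 1 + 1 := by ring
      rw [h, altL_cons, altL_cons, List.map_cons, List.map_cons, List.sum_cons,
        List.sum_cons, ih]
      ring

/-- the coefficient functional on words -/
def coeff (w : List (Fin r)) : TV k r →ₗ[k] k :=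
  (Finsupp.lapply (FreeMonoid.ofList w)) ∘ₗ (MonoidAlgebra.coeffLinearEquiv k).toLinearMap ∘ₗ
    (FreeAlgebra.equivMonoidAlgebraFreeMonoid (R := k) (X := Fin r)).toLinearMap

abbrev tvE := (FreeAlgebra.equivMonoidAlgebraFreeMonoid (R := k) (X := Fin r))

lemma coeff_apply (w : List (Fin r)) (x : TV k r) :
    coeff w x = (tvE (k := k) x).coeff (FreeMonoid.ofList w) := rfl

lemma tvE_iota (i : Fin r) :
    tvE (k := k) (FreeAlgebra.ι k i) =
      MonoidAlgebra.single (FreeMonoid.of i) (1 : k) := by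
  simp [tvE, FreeAlgebra.equivMonoidAlgebraFreeMonoid, MonoidAlgebra.of_apply]

lemma tvE_word (ws : List (Fin r)) :
    tvE (k := k) ((ws.map (FreeAlgebra.ι k)).prod) =
      MonoidAlgebra.single (FreeMonoid.ofList ws) (1 : k) := by
  induction ws with
  | nil =>
      rw [List.map_nil, List.prod_nil, map_one]; rfl
  | cons a l ih =>
      rw [List.map_cons, List.prod_cons, map_mul, tvE_iota, ih,
        MonoidAlgebra.single_mul_single, one_mul]
      rfl

lemma coeff_word (w ws : List (Fin r)) :
    coeff w ((ws.map (FreeAlgebra.ι k)).prod) = if ws = w then (1 : k) else 0 := by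
  classical
  rw [coeff_apply, tvE_word, MonoidAlgebra.single_apply]
  have h : (FreeMonoid.ofList ws = FreeMonoid.ofList w) ↔ ws = w :=
    ⟨fun h => congrArg FreeMonoid.toList h, fun h => congrArg FreeMonoid.ofList h⟩
  exact if_congr h rfl rfl

lemma coeff_cons_mul (i s : Fin r) (w : List (Fin r)) (x : TV k r) :
    coeff (s :: w) (FreeAlgebra.ι k i * x) =
      if i = s then coeff w x else 0 := by
  rw [coeff_apply, map_mul, tvE_iota]
  by_cases h : i = s
  · subst h
    rw [if_pos rfl, coeff_apply]
    refine (MonoidAlgebra.single_mul_apply_aux _ fun a _ => ?_).trans (one_mul _)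
    constructor
    · intro ha
      have : FreeMonoid.toList (FreeMonoid.of i * a) = i :: w := congrArg FreeMonoid.toList ha
      rw [FreeMonoid.toList_mul, FreeMonoid.toList_of] at this
      have := List.cons.injEq i a.toList i w ▸ this
      exact congrArg FreeMonoid.ofList (List.cons.inj ha).2
    · rintro rfl; rfl
  · rw [if_neg h]
    apply MonoidAlgebra.single_mul_apply_of_not_exists_mul
    rintro ⟨d, hd⟩
    have : (s : Fin r) :: w = i :: d.toList := congrArg FreeMonoid.toList hd
    exact h ((List.cons.inj this).1).symm

lemma coeff_nil_mul (i : Fin r) (x : TV k r) :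
    coeff ([] : List (Fin r)) (FreeAlgebra.ι k i * x) = 0 := by
  rw [coeff_apply, map_mul, tvE_iota]
  apply MonoidAlgebra.single_mul_apply_of_not_exists_mul
  rintro ⟨d, hd⟩
  have : ([] : List (Fin r)) = i :: d.toList := congrArg FreeMonoid.toList hd
  simp at this

lemma coeff_append_mul (i s : Fin r) (w : List (Fin r)) (x : TV k r) :
    coeff (w ++ [s]) (x * FreeAlgebra.ι k i) =
      if i = s then coeff w x else 0 := by
  rw [coeff_apply, map_mul, tvE_iota]
  by_cases h : i = s
  · subst h
    rw [if_pos rfl, coeff_apply]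
    refine (MonoidAlgebra.mul_single_apply_aux _ fun a _ => ?_).trans (mul_one _)
    constructor
    · intro ha
      have : a.toList ++ [i] = w ++ [i] := congrArg FreeMonoid.toList ha
      obtain ⟨h1, _⟩ := List.append_inj' this rfl
      exact congrArg FreeMonoid.ofList h1
    · rintro rfl; rfl
  · rw [if_neg h]
    apply MonoidAlgebra.mul_single_apply_of_not_exists_mul
    rintro ⟨d, hd⟩
    have : w ++ [s] = d.toList ++ [i] := congrArg FreeMonoid.toList hd
    obtain ⟨_, h2⟩ := List.append_inj' this rfl
    exact h ((List.cons.inj h2).1).symm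

lemma sgn_iota (i : Fin r) :
    sgn k r (FreeAlgebra.ι k i) = -(FreeAlgebra.ι k i) :=
  FreeAlgebra.lift_ι_apply _ _

lemma sgn_word (L : List (Fin r)) :
    sgn k r ((L.map (FreeAlgebra.ι k)).prod) =
      ((-1 : k) ^ L.length) • (L.map (FreeAlgebra.ι k)).prod := by
  induction L with
  | nil => simp
  | cons a l ih =>
      rw [List.map_cons, List.prod_cons, map_mul, sgn_iota, ih, List.length_cons,
        pow_succ]
      rw [mul_smul_comm, neg_mul, smul_neg, mul_neg_one, neg_smul]

end SAux

namespace SAux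
variable {k r}
variable {deg : Fin r → ℕ} {d : TV k r →ₗ[k] TV k r}

lemma iota_mem_Tgr (i : Fin r) : FreeAlgebra.ι k i ∈ Tgr k r deg (deg i) :=
  Submodule.subset_span ⟨[i], by simp, by simp⟩

lemma one_mem_Tgr : (1 : TV k r) ∈ Tgr k r deg 0 :=
  Submodule.subset_span ⟨[], by simp, by simp⟩

lemma word_mem_Tgr (w : List (Fin r)) :
    (w.map (FreeAlgebra.ι k)).prod ∈ Tgr k r deg ((w.map deg).sum) :=
  Submodule.subset_span ⟨w, rfl, rfl⟩

variable (hodd : ∀ i, Odd (deg i))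
  (hLeib : ∀ m : ℕ, ∀ a ∈ Tgr k r deg m, ∀ b : TV k r,
      d (a * b) = d a * b + ((-1 : k) ^ m) • (a * d b))

include hodd hLeib in
lemma d_iota_mul (i : Fin r) (y : TV k r) :
    d (FreeAlgebra.ι k i * y) =
      d (FreeAlgebra.ι k i) * y - FreeAlgebra.ι k i * d y := by
  rw [hLeib (deg i) _ (iota_mem_Tgr i) y, Odd.neg_one_pow (hodd i), neg_smul, one_smul,
    sub_eq_add_neg]

include hodd hLeib in
lemma d_word_zero (hd1 : d 1 = 0) (L : List (Fin r)) (h : ∀ x ∈ L, d (FreeAlgebra.ι k x) = 0) :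
    d ((L.map (FreeAlgebra.ι k)).prod) = 0 := by
  induction L with
  | nil => simpa using hd1
  | cons a l ih =>
      rw [List.map_cons, List.prod_cons, d_iota_mul hodd hLeib,
        h a List.mem_cons_self, ih fun x hx => h x (List.mem_cons_of_mem a hx),
        zero_mul, mul_zero, sub_zero]

variable {α : Fin r → Fin r → Fin r → k} {i0 i1 : Fin r}

include hodd hLeib in
/-- key lemma: the coefficient of any alternating `{i0,i1}`-word in `d x` vanishes. -/
lemma coeff_d_zero
    (hgen : ∀ i, d (FreeAlgebra.ι k i) =
      ∑ j : Fin r, ∑ l : Fin r, α i j l • (FreeAlgebra.ι k j * FreeAlgebra.ι k l))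
    (hA : ∀ i, α i i0 i1 = 0) (hB : ∀ i, α i i1 i0 = 0)
    (hd1 : d 1 = 0)
    (len : ℕ) (s t : Fin r) (hst : (s = i0 ∧ t = i1) ∨ (s = i1 ∧ t = i0))
    (x : TV k r) :
    coeff (altL s t len) (d x) = 0 := by
  -- first for words
  have hword : ∀ ws : List (Fin r), ∀ len : ℕ, ∀ s t : Fin r,
      ((s = i0 ∧ t = i1) ∨ (s = i1 ∧ t = i0)) →
      coeff (altL s t len) (d ((ws.map (FreeAlgebra.ι k)).prod)) = 0 := by
    intro ws
    induction ws with
    | nil => intro len s t _; simp [hd1]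
    | cons i l ih =>
        intro len s t hst
        rw [List.map_cons, List.prod_cons, d_iota_mul hodd hLeib, map_sub, hgen i]
        have h2 : coeff (altL s t len)
            (FreeAlgebra.ι k i * d ((l.map (FreeAlgebra.ι k)).prod)) = 0 := by
          match len with
          | 0 => exact coeff_nil_mul _ _
          | len' + 1 =>
              rw [altL_cons, coeff_cons_mul]
              split
              · rcases hst with ⟨h1, h2⟩ | ⟨h1, h2⟩
                · exact ih len' t s (Or.inr ⟨h2, h1⟩)
                · exact ih len' t s (Or.inl ⟨h2, h1⟩)
              · rfl
        rw [h2, sub_zero, Finset.sum_mul]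
        rw [map_sum]
        apply Finset.sum_eq_zero
        intro j _
        rw [Finset.sum_mul, map_sum]
        apply Finset.sum_eq_zero
        intro m _
        rw [smul_mul_assoc, mul_assoc, map_smul, smul_eq_mul]
        match len with
        | 0 => rw [altL_zero, coeff_nil_mul, mul_zero]
        | 1 =>
            rw [altL_cons, altL_zero, coeff_cons_mul]
            split
            · rw [coeff_nil_mul, mul_zero]
            · rw [mul_zero]
        | len' + 2 =>
            rw [altL_cons, altL_cons, coeff_cons_mul]
            split
            · rename_i hj
              rw [coeff_cons_mul]
              split
              · rename_i hm
                subst hj; subst hm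
                rcases hst with ⟨rfl, rfl⟩ | ⟨rfl, rfl⟩
                · rw [hA i, zero_mul]
                · rw [hB i, zero_mul]
              · rw [mul_zero]
            · rw [mul_zero]
  -- extend to all x by linearity
  have hx : x = tvE.symm (tvE (k := k) x) := (AlgEquiv.symm_apply_apply _ _).symm
  rw [hx]
  generalize (tvE (k := k) x) = f
  induction f using MonoidAlgebra.induction_linear with
  | zero => rw [map_zero, map_zero, map_zero]
  | add f g hf hg => rw [map_add, map_add, map_add, hf, hg, add_zero]
  | single m c =>
      have hw := tvE_word (k := k) (r := r) m.toList
      rw [FreeMonoid.ofList_toList] at hw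
      have h1 : (tvE (k := k)).symm (MonoidAlgebra.single m (1 : k)) =
          (m.toList.map (FreeAlgebra.ι k)).prod := by
        rw [← hw, AlgEquiv.symm_apply_apply]
      have : (tvE (k := k)).symm (MonoidAlgebra.single m c) =
          c • ((m.toList.map (FreeAlgebra.ι k)).prod) := by
        rw [← h1, ← map_smul, MonoidAlgebra.smul_single', mul_one]
      rw [this, map_smul, map_smul, hword m.toList len s t hst, smul_zero]

end SAux

namespace SAux
variable {k : Type} [Field k] {r : ℕ}

lemma word_mul_iota (L : List (Fin r)) (i : Fin r) :
    ((L.map (FreeAlgebra.ι k)).prod) * FreeAlgebra.ι k i =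
      (((L ++ [i]).map (FreeAlgebra.ι k))).prod := by
  simp [List.map_append, List.prod_append]

lemma iota_mul_word (L : List (Fin r)) (i : Fin r) :
    FreeAlgebra.ι k i * (L.map (FreeAlgebra.ι k)).prod =
      (((i :: L).map (FreeAlgebra.ι k))).prod := by
  simp

lemma altL_mem {s t x : Fin r} {len : ℕ} (h : x ∈ altL s t len) : x = s ∨ x = t := by
  unfold altL at h
  rw [List.mem_map] at h
  obtain ⟨j, _, hj⟩ := h
  split at hj
  · exact Or.inl hj.symm
  · exact Or.inr hj.symm

end SAux


/-- **Statement 12.** Let `V` have homogeneous basis `v₁,…,v_r` of odd positive degrees and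
let `d` be the degree `−1` derivation of `T(V)` with `dv₁ = dv₂ = 0` and
`dvᵢ = Σ_{j,l} α^i_{jl} vⱼ ⊗ v_l`, where `α^i_{12} = α^i_{21} = 0` for all `i` and
`d ∘ d = 0`.  Then for every `n ≥ 1` the homology of `(Q, δ)` in degree
`n(|v₁| + |v₂|) + 1` is nonzero; in particular `H_m(Q, δ) ≠ 0` for a strictly increasing
sequence of integers `m`. -/
theorem homology_QC_nonzero
    (k : Type) [Field k] (r : ℕ) (hr : 2 ≤ r)
    (deg : Fin r → ℕ) (hodd : ∀ i, Odd (deg i)) (hpos : ∀ i, 0 < deg i)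
    (d : TV k r →ₗ[k] TV k r) (α : Fin r → Fin r → Fin r → k)
    (hd1 : d (FreeAlgebra.ι k (⟨0, by omega⟩ : Fin r)) = 0)
    (hd2 : d (FreeAlgebra.ι k (⟨1, by omega⟩ : Fin r)) = 0)
    (hα1 : ∀ j l, α ⟨0, by omega⟩ j l = 0)
    (hα2 : ∀ j l, α ⟨1, by omega⟩ j l = 0)
    (hα12 : ∀ i, α i ⟨0, by omega⟩ ⟨1, by omega⟩ = 0)
    (hα21 : ∀ i, α i ⟨1, by omega⟩ ⟨0, by omega⟩ = 0)
    (hgen : ∀ i, d (FreeAlgebra.ι k i) =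
      ∑ j : Fin r, ∑ l : Fin r, α i j l • (FreeAlgebra.ι k j * FreeAlgebra.ι k l))
    (hαdeg : ∀ i j l, α i j l ≠ 0 → deg j + deg l + 1 = deg i)
    (hLeib : ∀ m : ℕ, ∀ a ∈ Tgr k r deg m, ∀ b : TV k r,
      d (a * b) = d a * b + ((-1 : k) ^ m) • (a * d b))
    (hdd : d ∘ₗ d = 0)
    (hdeg : ∀ m : ℕ, ∀ x ∈ Tgr k r deg (m + 1), d x ∈ Tgr k r deg m)
    (hdeg0 : ∀ x ∈ Tgr k r deg 0, d x = 0) :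
    (∀ n : ℕ, 1 ≤ n →
      Nontrivial (HQ k r deg d α
        (n * (deg (⟨0, by omega⟩ : Fin r) + deg (⟨1, by omega⟩ : Fin r)) + 1))) ∧
    ∃ s : ℕ → ℕ, StrictMono s ∧ ∀ i : ℕ, Nontrivial (HQ k r deg d α (s i)) := by
  classical
  have h0r : 0 < r := by omega
  have h1r : 1 < r := by omega
  set i0 : Fin r := ⟨0, h0r⟩ with hi0def
  set i1 : Fin r := ⟨1, h1r⟩ with hi1def
  have hne : i0 ≠ i1 := by
    intro h; exact absurd (congrArg Fin.val h) (by simp [hi0def, hi1def])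
  have hd1' : d 1 = 0 := hdeg0 1 SAux.one_mem_Tgr
  have hdι : ∀ x : Fin r, x = i0 ∨ x = i1 → d (FreeAlgebra.ι k x) = 0 := by
    rintro x (rfl | rfl)
    · exact hd1
    · exact hd2
  have hα12' : ∀ i, α i i0 i1 = 0 := hα12
  have hα21' : ∀ i, α i i1 i0 = 0 := hα21
  have hα1' : ∀ j l, α i0 j l = 0 := hα1
  have hα2' : ∀ j l, α i1 j l = 0 := hα2
  have key : ∀ p : ℕ,
      Nontrivial (HQ k r deg d α ((p + 1) * (deg i0 + deg i1) + 1)) := by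
    intro p
    set m := (p + 1) * (deg i0 + deg i1) + 1 with hm
    set L1 := SAux.altL i0 i1 (2 * p + 1) with hL1
    set L2 := SAux.altL i1 i0 (2 * p + 1) with hL2
    set A := (L1.map (FreeAlgebra.ι k)).prod with hA
    set B := (L2.map (FreeAlgebra.ι k)).prod with hB
    set g : Fin r → TV k r :=
      fun u => if u = i1 then A else if u = i0 then -B else 0 with hg
    set X : QC k r := (0, g) with hX
    have hgi1 : g i1 = A := by rw [hg]; simp
    have hgi0 : g i0 = -B := by rw [hg]; simp [hne]
    have hgother : ∀ u, u ≠ i0 → u ≠ i1 → g u = 0 := by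
      intro u h0 h1; rw [hg]; simp [h0, h1]
    have hdA : d A = 0 :=
      SAux.d_word_zero hodd hLeib hd1' L1 (fun x hx => hdι x (SAux.altL_mem hx))
    have hdB : d B = 0 :=
      SAux.d_word_zero hodd hLeib hd1' L2
        (fun x hx => hdι x (Or.symm (SAux.altL_mem hx)))
    have hdg : ∀ t, d (g t) = 0 := by
      intro t
      by_cases h1 : t = i1
      · rw [h1, hgi1, hdA]
      · by_cases h0 : t = i0
        · rw [h0, hgi0, map_neg, hdB, neg_zero]
        · rw [hgother t h0 h1, map_zero]
    have hlen1 : L1.length = 2 * p + 1 := by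
      rw [hL1]; simp [SAux.altL]
    have hlen2 : L2.length = 2 * p + 1 := by
      rw [hL2]; simp [SAux.altL]
    have hsgnw : ∀ L : List (Fin r), L.length = 2 * p + 1 →
        sgn k r ((L.map (FreeAlgebra.ι k)).prod) =
          -((L.map (FreeAlgebra.ι k)).prod) := by
      intro L hL
      rw [SAux.sgn_word, hL, Odd.neg_one_pow ⟨p, by ring⟩, neg_smul, one_smul]
    have hsA : sgn k r A = -A := hsgnw L1 hlen1
    have hsB : sgn k r B = -B := hsgnw L2 hlen2
    set W := ((SAux.altL i0 i1 (2 * p + 1 + 1)).map (FreeAlgebra.ι k)).prod with hW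
    set W' := ((SAux.altL i1 i0 (2 * p + 1 + 1)).map (FreeAlgebra.ι k)).prod with hW'
    have hAW : A * FreeAlgebra.ι k i1 = W := by
      rw [hA, SAux.word_mul_iota, hW]
      congr 2
      rw [SAux.altL_append, if_neg (by omega), hL1]
    have h0B : FreeAlgebra.ι k i0 * B = W := by
      rw [hB, SAux.iota_mul_word, hW]
      congr 2
      rw [SAux.altL_cons, hL2]
    have h1A : FreeAlgebra.ι k i1 * A = W' := by
      rw [hA, SAux.iota_mul_word, hW']
      congr 2
      rw [SAux.altL_cons, hL1]
    have hBW : B * FreeAlgebra.ι k i0 = W' := by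
      rw [hB, SAux.word_mul_iota, hW']
      congr 2
      rw [SAux.altL_append, if_neg (by omega), hL2]
    have hle1 : deg i1 + 1 ≤ m := by
      have h := Nat.le_mul_of_pos_left (deg i0 + deg i1) (show 0 < p + 1 by omega)
      omega
    have hle0 : deg i0 + 1 ≤ m := by
      have h := Nat.le_mul_of_pos_left (deg i0 + deg i1) (show 0 < p + 1 by omega)
      omega
    have hXQ : X ∈ Qgr k r deg m := by
      simp only [Qgr]
      rw [Submodule.mem_prod]
      refine ⟨Submodule.zero_mem _, ?_⟩
      rw [Submodule.mem_pi]
      intro u _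
      show g u ∈ _
      by_cases h1 : u = i1
      · subst h1
        rw [hgi1, if_pos hle1]
        have harith : m - (deg i1 + 1) = (p + 1) * deg i0 + p * deg i1 :=
          Nat.sub_eq_of_eq_add (by rw [hm]; ring)
        rw [harith, ← SAux.altL_sum deg i0 i1 p]
        exact SAux.word_mem_Tgr L1
      · by_cases h0 : u = i0
        · subst h0
          rw [hgi0, if_pos hle0]
          have harith : m - (deg i0 + 1) = (p + 1) * deg i1 + p * deg i0 :=
            Nat.sub_eq_of_eq_add (by rw [hm]; ring)
          rw [harith, ← SAux.altL_sum deg i1 i0 p]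
          exact neg_mem (SAux.word_mem_Tgr L2)
        · rw [hgother u h0 h1]
          split
          · exact Submodule.zero_mem _
          · exact Submodule.zero_mem _
    have hXker : deltaQ k r d α X = 0 := by
      simp only [deltaQ]
      rw [LinearMap.prod_apply]
      simp only [Function.prod]
      rw [Prod.mk_eq_zero]
      constructor
      · simp only [LinearMap.add_apply, LinearMap.coe_comp,
          Function.comp_apply, LinearMap.fst_apply, LinearMap.sum_apply,
          LinearMap.sub_apply, LinearMap.mulRight_apply, LinearMap.mulLeft_apply,
          AlgHom.toLinearMap_apply, LinearMap.proj_apply, LinearMap.snd_apply]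
        rw [map_zero, zero_add]
        have hvanish : ∀ x ∈ (Finset.univ : Finset (Fin r)),
            x ∉ ({i0, i1} : Finset (Fin r)) →
            sgn k r (g x) * FreeAlgebra.ι k x - FreeAlgebra.ι k x * g x = 0 := by
          intro x _ hx
          rw [Finset.mem_insert, Finset.mem_singleton] at hx
          push_neg at hx
          rw [hgother x hx.1 hx.2, map_zero, zero_mul, mul_zero, sub_zero]
        rw [← Finset.sum_subset (Finset.subset_univ ({i0, i1} : Finset (Fin r))) hvanish,
          Finset.sum_pair hne, hgi0, hgi1, hsA, map_neg, hsB, neg_neg, neg_mul,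
          hAW, h1A, hBW, mul_neg, h0B, sub_neg_eq_add]
        abel
      · funext t
        rw [LinearMap.pi_apply]
        simp only [LinearMap.add_apply, LinearMap.sub_apply, LinearMap.coe_comp,
          Function.comp_apply, LinearMap.snd_apply, LinearMap.proj_apply,
          LinearMap.sum_apply, LinearMap.smul_apply, LinearMap.mulRight_apply,
          LinearMap.mulLeft_apply, AlgHom.toLinearMap_apply]
        rw [hdg t, Pi.zero_apply]
        have e1 : (∑ i : Fin r, ∑ j : Fin r,
            α i j t • (sgn k r (g i) * FreeAlgebra.ι k j)) = 0 := by
          apply Finset.sum_eq_zero; intro i _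
          apply Finset.sum_eq_zero; intro j _
          by_cases h0 : i = i0
          · rw [h0, hα1', zero_smul]
          · by_cases h1 : i = i1
            · rw [h1, hα2', zero_smul]
            · rw [hgother i h0 h1, map_zero, zero_mul, smul_zero]
        have e2 : (∑ i : Fin r, ∑ l : Fin r,
            α i t l • (FreeAlgebra.ι k l * g i)) = 0 := by
          apply Finset.sum_eq_zero; intro i _
          apply Finset.sum_eq_zero; intro l _
          by_cases h0 : i = i0
          · rw [h0, hα1', zero_smul]
          · by_cases h1 : i = i1
            · rw [h1, hα2', zero_smul]
            · rw [hgother i h0 h1, mul_zero, smul_zero]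
        rw [e1, e2]
        simp
    have hbd : ∀ y : QC k r, SAux.coeff L1 ((deltaQ k r d α y).2 i1) = 0 := by
      intro y
      simp only [deltaQ, LinearMap.prod_apply, Function.prod, LinearMap.pi_apply,
        LinearMap.add_apply, LinearMap.sub_apply, LinearMap.coe_comp,
        Function.comp_apply, LinearMap.snd_apply, LinearMap.proj_apply,
        LinearMap.sum_apply, LinearMap.smul_apply, LinearMap.mulRight_apply,
        LinearMap.mulLeft_apply, AlgHom.toLinearMap_apply]
      rw [map_sub, map_add]
      have t1 : SAux.coeff L1 (d (y.2 i1)) = 0 := by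
        rw [hL1]
        exact SAux.coeff_d_zero hodd hLeib hgen hα12' hα21' hd1'
          (2 * p + 1) i0 i1 (Or.inl ⟨rfl, rfl⟩) _
      have hL1app : L1 = SAux.altL i0 i1 (2 * p) ++ [i0] := by
        rw [hL1, SAux.altL_append, if_pos (by omega)]
      have hL1cons : L1 = i0 :: SAux.altL i1 i0 (2 * p) := by
        rw [hL1, SAux.altL_cons]
      have t2 : SAux.coeff L1 (∑ i : Fin r, ∑ j : Fin r,
          α i j i1 • (sgn k r (y.2 i) * FreeAlgebra.ι k j)) = 0 := by
        rw [map_sum]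
        apply Finset.sum_eq_zero; intro i _
        rw [map_sum]
        apply Finset.sum_eq_zero; intro j _
        rw [map_smul, smul_eq_mul]
        rcases eq_or_ne j i0 with rfl | hj
        · rw [hα12' i, zero_mul]
        · rw [hL1app, SAux.coeff_append_mul, if_neg hj, mul_zero]
      have t3 : SAux.coeff L1 (∑ i : Fin r, ∑ l : Fin r,
          α i i1 l • (FreeAlgebra.ι k l * y.2 i)) = 0 := by
        rw [map_sum]
        apply Finset.sum_eq_zero; intro i _
        rw [map_sum]
        apply Finset.sum_eq_zero; intro l _
        rw [map_smul, smul_eq_mul]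
        rcases eq_or_ne l i0 with rfl | hl
        · rw [hα21' i, zero_mul]
        · rw [hL1cons, SAux.coeff_cons_mul, if_neg hl, mul_zero]
      rw [t1, t2, t3]
      simp
    have hXmem : X ∈ Qgr k r deg m ⊓ LinearMap.ker (deltaQ k r d α) :=
      Submodule.mem_inf.mpr ⟨hXQ, LinearMap.mem_ker.mpr hXker⟩
    refine ⟨Submodule.Quotient.mk ⟨X, hXmem⟩, 0, fun hcon => ?_⟩
    rw [Submodule.Quotient.mk_eq_zero, Submodule.mem_comap] at hcon
    rw [Submodule.coe_subtype] at hcon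
    obtain ⟨y, -, hy⟩ := hcon
    have h1 : SAux.coeff L1 (X.2 i1) = 0 := by
      have hy' : deltaQ k r d α y = X := hy
      rw [← hy']
      exact hbd y
    have h2 : SAux.coeff L1 (X.2 i1) = 1 := by
      have hXA : X.2 i1 = A := hgi1
      rw [hXA, hA, SAux.coeff_word, if_pos rfl]
    exact one_ne_zero (h2.symm.trans h1)
  constructor
  · intro n hn
    obtain ⟨p, rfl⟩ : ∃ p, n = p + 1 := ⟨n - 1, by omega⟩
    exact key p
  · refine ⟨fun i => (i + 1) * (deg i0 + deg i1) + 1, ?_, fun i => key i⟩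
    intro a b hab
    have hS : 0 < deg i0 + deg i1 := by have := hpos i0; omega
    show (a + 1) * (deg i0 + deg i1) + 1 < (b + 1) * (deg i0 + deg i1) + 1
    exact Nat.add_lt_add_right
      (Nat.mul_lt_mul_of_pos_right (by omega) hS) 1
end
end
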